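/- Let Λ be a row-finite k-graph and Λ̄ its desourcification. Suppose μ,ν ∈ Λ̄ satisfy μ ∼_{Λ̄} ν. If μ = [x;(m,m+d(μ))] for some x ∈ Λ^{≤∞} and m ∈ ℕ^k, then ν = [x;(m,m+d(ν))]. -/

import Mathlib

/-!
Common definitions: higher-rank graphs (`k`-graphs), boundary paths, the
equivalence relation `∼_Λ`, the periodicity group `Per(Λ)`, maximal tails,
hereditary/saturated sets, and (an axiomatization of) the Farthing
desourcification `Λ̄` of a locally convex row-finite `k`-graph `Λ`.
-/

/-- A `k`-graph: a countable small category `Λ` equipped with a degree functor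
`d : Λ → ℕ^k` satisfying the factorization property.  Elements of `Path` are
the morphisms ("paths"); the vertices are the identity morphisms (the paths `v`
with `r v = v`, equivalently of degree `0`).  The composition `comp μ ν` is
only meaningful when `s μ = r ν`. -/
structure KGraph (k : ℕ) where
  Path : Type
  countable_path : Countable Path
  nonempty_path : Nonempty Path
  r : Path → Path
  s : Path → Path
  d : Path → Fin k → ℕ
  comp : Path → Path → Path
  d_r : ∀ μ, d (r μ) = 0
  d_s : ∀ μ, d (s μ) = 0
  r_r : ∀ μ, r (r μ) = r μ
  s_r : ∀ μ, s (r μ) = r μ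
  r_s : ∀ μ, r (s μ) = s μ
  s_s : ∀ μ, s (s μ) = s μ
  comp_id : ∀ μ, comp μ (s μ) = μ
  id_comp : ∀ μ, comp (r μ) μ = μ
  r_comp : ∀ μ ν, s μ = r ν → r (comp μ ν) = r μ
  s_comp : ∀ μ ν, s μ = r ν → s (comp μ ν) = s ν
  d_comp : ∀ μ ν, s μ = r ν → d (comp μ ν) = d μ + d ν
  comp_assoc : ∀ μ ν ρ, s μ = r ν → s ν = r ρ →
    comp (comp μ ν) ρ = comp μ (comp ν ρ)
  factorization : ∀ (lam : Path) (m n : Fin k → ℕ), d lam = m + n →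
    ∃! p : Path × Path, d p.1 = m ∧ d p.2 = n ∧ s p.1 = r p.2 ∧ lam = comp p.1 p.2

namespace KGraph

variable {k : ℕ}

/-- The vertices of a `k`-graph are its identity morphisms. -/
def IsVertex (Λ : KGraph k) (v : Λ.Path) : Prop := Λ.r v = v

/-- `Λ.boundedPaths n` is the set `Λ^{≤ n}`: paths `λ` with `d λ ≤ n` such that
`d(λ)_i < n_i` implies `s(λ)Λ^{e_i} = ∅`. -/
def boundedPaths (Λ : KGraph k) (n : Fin k → ℕ) : Set Λ.Path :=
  {lam | Λ.d lam ≤ n ∧ ∀ i : Fin k, Λ.d lam i < n i →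
    ∀ e, Λ.r e = Λ.s lam → Λ.d e ≠ Pi.single i 1}

/-- `Λ` is row-finite if every `vΛ^n` is finite. -/
def RowFinite (Λ : KGraph k) : Prop :=
  ∀ (v : Λ.Path) (n : Fin k → ℕ), Λ.IsVertex v →
    {lam | Λ.r lam = v ∧ Λ.d lam = n}.Finite

/-- `Λ` is locally convex if for `i ≠ j`, `λ ∈ vΛ^{e_i}` and `μ ∈ vΛ^{e_j}`
one has `s(λ)Λ^{e_j} ≠ ∅` (by symmetry in `i, j` this also gives
`s(μ)Λ^{e_i} ≠ ∅`). -/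
def LocallyConvex (Λ : KGraph k) : Prop :=
  ∀ i j : Fin k, i ≠ j → ∀ lam mu : Λ.Path, Λ.r lam = Λ.r mu →
    Λ.d lam = Pi.single i 1 → Λ.d mu = Pi.single j 1 →
    ∃ lam', Λ.r lam' = Λ.s lam ∧ Λ.d lam' = Pi.single j 1

end KGraph

/-- A boundary path of `Λ`: a degree-preserving functor `x : Ω_{k,m} → Λ`
(`m = deg ∈ (ℕ ∪ {∞})^k`) such that `p ≤ m` and `p_i = m_i` imply
`x(p)Λ^{e_i} = ∅`.  `seg p q` is the path `x(p,q)`, meaningful for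
`p ≤ q ≤ deg`; `seg p p` is the vertex `x(p)`. -/
structure BoundaryPath {k : ℕ} (Λ : KGraph k) where
  deg : Fin k → ℕ∞
  seg : (Fin k → ℕ) → (Fin k → ℕ) → Λ.Path
  seg_d : ∀ p q : Fin k → ℕ, p ≤ q → (∀ i, (q i : ℕ∞) ≤ deg i) →
    Λ.d (seg p q) = q - p
  seg_r : ∀ p q : Fin k → ℕ, p ≤ q → (∀ i, (q i : ℕ∞) ≤ deg i) →
    Λ.r (seg p q) = seg p p
  seg_s : ∀ p q : Fin k → ℕ, p ≤ q → (∀ i, (q i : ℕ∞) ≤ deg i) →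
    Λ.s (seg p q) = seg q q
  seg_comp : ∀ p q t : Fin k → ℕ, p ≤ q → q ≤ t → (∀ i, (t i : ℕ∞) ≤ deg i) →
    Λ.comp (seg p q) (seg q t) = seg p t
  boundary : ∀ p : Fin k → ℕ, (∀ i, (p i : ℕ∞) ≤ deg i) →
    ∀ i : Fin k, (p i : ℕ∞) = deg i →
      ∀ e, Λ.r e = seg p p → Λ.d e ≠ Pi.single i 1

/-- `emin m e` is the coordinatewise minimum `m ∧ e` of `m ∈ ℕ^k` with the
(possibly infinite) degree `e ∈ (ℕ ∪ {∞})^k`, as an element of `ℕ^k`. -/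
noncomputable def emin {k : ℕ} (m : Fin k → ℕ) (e : Fin k → ℕ∞) : Fin k → ℕ :=
  fun i => (min ((m i : ℕ∞)) (e i)).toNat

/-- Equality of boundary paths (of the same degree), as functors. -/
def BPEq {k : ℕ} {Λ : KGraph k} (x y : BoundaryPath Λ) : Prop :=
  x.deg = y.deg ∧ ∀ p q : Fin k → ℕ, p ≤ q → (∀ i, (q i : ℕ∞) ≤ x.deg i) →
    x.seg p q = y.seg p q

/-- `IsExtension Λ lam x y` says that `y = lam · x` is the (unique) boundary
path with `y(0, d lam) = lam` and `y(d lam, d lam + p) = x(0, p)`. -/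
def IsExtension {k : ℕ} (Λ : KGraph k) (lam : Λ.Path) (x y : BoundaryPath Λ) :
    Prop :=
  (∀ i, y.deg i = (Λ.d lam i : ℕ∞) + x.deg i) ∧
  y.seg 0 (Λ.d lam) = lam ∧
  ∀ p : Fin k → ℕ, (∀ i, (p i : ℕ∞) ≤ x.deg i) →
    y.seg (Λ.d lam) (Λ.d lam + p) = x.seg 0 p

/-- The relation `μ ∼_Λ ν`: `s μ = s ν` and `μx = νx` for every boundary path
`x ∈ s(μ)Λ^{≤∞}`. -/
def KGraph.peq {k : ℕ} (Λ : KGraph k) (μ ν : Λ.Path) : Prop :=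
  Λ.s μ = Λ.s ν ∧ ∀ x y z : BoundaryPath Λ, x.seg 0 0 = Λ.s μ →
    IsExtension Λ μ x y → IsExtension Λ ν x z → BPEq y z

/-- `Per(Λ) = {d μ - d ν : μ ∼_Λ ν} ⊆ ℤ^k`. -/
def KGraph.Per {k : ℕ} (Λ : KGraph k) : Set (Fin k → ℤ) :=
  {g | ∃ μ ν : Λ.Path, Λ.peq μ ν ∧ g = fun i => (Λ.d μ i : ℤ) - (Λ.d ν i : ℤ)}

/-- `Λ` is aperiodic if for every vertex `v` there is a boundary path
`x ∈ vΛ^{≤∞}` such that distinct `μ, ν ∈ Λv` have `μx ≠ νx`. -/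
def KGraph.Aperiodic {k : ℕ} (Λ : KGraph k) : Prop :=
  ∀ v : Λ.Path, Λ.IsVertex v → ∃ x : BoundaryPath Λ, x.seg 0 0 = v ∧
    ∀ μ ν : Λ.Path, Λ.s μ = v → Λ.s ν = v → μ ≠ ν →
      ∀ y z : BoundaryPath Λ, IsExtension Λ μ x y → IsExtension Λ ν x z →
        ¬ BPEq y z

/-- A maximal tail: a nonempty set `T` of vertices such that (1) `s λ ∈ T`
implies `r λ ∈ T`; (2) for `v ∈ T` and `n ∈ ℕ^k` there is `λ ∈ vΛ^{≤n}` with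
`s λ ∈ T`; (3) any `v, w ∈ T` are connected via `μ ∈ vΛ`, `ν ∈ wΛ` with
`s μ = s ν`. -/
def KGraph.IsMaximalTail {k : ℕ} (Λ : KGraph k) (T : Set Λ.Path) : Prop :=
  T.Nonempty ∧ (∀ v ∈ T, Λ.IsVertex v) ∧
  (∀ lam : Λ.Path, Λ.s lam ∈ T → Λ.r lam ∈ T) ∧
  (∀ v ∈ T, ∀ n : Fin k → ℕ,
    ∃ lam ∈ Λ.boundedPaths n, Λ.r lam = v ∧ Λ.s lam ∈ T) ∧
  (∀ v ∈ T, ∀ w ∈ T, ∃ μ ν : Λ.Path, Λ.r μ = v ∧ Λ.r ν = w ∧ Λ.s μ = Λ.s ν)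

/-- `H_{Per(Λ)}`: the set of vertices `v` such that for all `μ ∈ vΛ` and
`m ∈ ℕ^k` with `d μ - m ∈ Per(Λ)` there exists `ν ∈ vΛ^m` with `μ ∼_Λ ν`. -/
def KGraph.HPer {k : ℕ} (Λ : KGraph k) : Set Λ.Path :=
  {v | Λ.IsVertex v ∧ ∀ μ : Λ.Path, Λ.r μ = v → ∀ m : Fin k → ℕ,
    (fun i => (Λ.d μ i : ℤ) - (m i : ℤ)) ∈ Λ.Per →
    ∃ ν : Λ.Path, Λ.r ν = v ∧ Λ.d ν = m ∧ Λ.peq μ ν}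

/-- A set of vertices `H` is hereditary if `r λ ∈ H` implies `s λ ∈ H`. -/
def KGraph.Hereditary {k : ℕ} (Λ : KGraph k) (H : Set Λ.Path) : Prop :=
  ∀ lam : Λ.Path, Λ.r lam ∈ H → Λ.s lam ∈ H

/-- A set of vertices `H` is saturated if `s(vΛ^{≤n}) ⊆ H` for some `n ∈ ℕ^k`
implies `v ∈ H`. -/
def KGraph.Saturated {k : ℕ} (Λ : KGraph k) (H : Set Λ.Path) : Prop :=
  ∀ v : Λ.Path, Λ.IsVertex v →
    (∃ n : Fin k → ℕ, ∀ lam ∈ Λ.boundedPaths n, Λ.r lam = v → Λ.s lam ∈ H) →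
    v ∈ H

/-- `Σ(H)`: the smallest saturated set containing `H`. -/
def KGraph.SatClosure {k : ℕ} (Λ : KGraph k) (H : Set Λ.Path) : Set Λ.Path :=
  ⋂₀ {S : Set Λ.Path | H ⊆ S ∧ Λ.Saturated S}

/-- A boundary path `x` is cofinal if every vertex `v` admits `n ≤ d x` with
`vΛx(n) ≠ ∅`. -/
def KGraph.CofinalBP {k : ℕ} (Λ : KGraph k) (x : BoundaryPath Λ) : Prop :=
  ∀ v : Λ.Path, Λ.IsVertex v → ∃ n : Fin k → ℕ,
    (∀ i, (n i : ℕ∞) ≤ x.deg i) ∧ ∃ μ : Λ.Path, Λ.r μ = v ∧ Λ.s μ = x.seg n n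

/-- `Λ` is cofinal if all of its boundary paths are cofinal. -/
def KGraph.Cofinal {k : ℕ} (Λ : KGraph k) : Prop :=
  ∀ x : BoundaryPath Λ, Λ.CofinalBP x

/-- `T(v) = {s μ : μ ∈ vΛ}`, the smallest hereditary set containing `v`. -/
def KGraph.tree {k : ℕ} (Λ : KGraph k) (v : Λ.Path) : Set Λ.Path :=
  {w | ∃ μ : Λ.Path, Λ.r μ = v ∧ Λ.s μ = w}

/-- `Δ(H₁,H₂) = {v ∈ H₁ : T(v) ∩ H₂ = ∅}`. -/
def KGraph.Delta {k : ℕ} (Λ : KGraph k) (H₁ H₂ : Set Λ.Path) : Set Λ.Path :=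
  {v ∈ H₁ | Λ.tree v ∩ H₂ = ∅}

/-- `Ω(H₁,H₂) = {v ∈ H₁ \ H₂ : T(v) ∩ H₂ ≠ ∅}`. -/
def KGraph.Omega {k : ℕ} (Λ : KGraph k) (H₁ H₂ : Set Λ.Path) : Set Λ.Path :=
  {v ∈ H₁ \ H₂ | (Λ.tree v ∩ H₂).Nonempty}

/-- The relation `H₁ ≻ H₂`. -/
def KGraph.Succ {k : ℕ} (Λ : KGraph k) (H₁ H₂ : Set Λ.Path) : Prop :=
  H₂ ⊆ H₁ ∧ (Λ.Delta H₁ H₂).Nonempty ∧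
  ∀ v ∈ Λ.Omega H₁ H₂, ∃ n : Fin k → ℕ,
    ∀ lam ∈ Λ.boundedPaths n, Λ.r lam = v → Λ.s lam ∈ H₂ ∪ Λ.Delta H₁ H₂

/-- `IsGlue Λ x n y p z` says that `z` is the boundary path
`x(0, n ∧ d x) · σ^{p ∧ d y}(y)`. -/
def IsGlue {k : ℕ} (Λ : KGraph k) (x : BoundaryPath Λ) (n : Fin k → ℕ)
    (y : BoundaryPath Λ) (p : Fin k → ℕ) (z : BoundaryPath Λ) : Prop :=
  (∀ i, z.deg i = (emin n x.deg i : ℕ∞) + (y.deg i - (emin p y.deg i : ℕ∞))) ∧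
  z.seg 0 (emin n x.deg) = x.seg 0 (emin n x.deg) ∧
  ∀ t : Fin k → ℕ, (∀ i, ((emin p y.deg i + t i : ℕ) : ℕ∞) ≤ y.deg i) →
    z.seg (emin n x.deg) (emin n x.deg + t) =
      y.seg (emin p y.deg) (emin p y.deg + t)

/-- The Farthing desourcification `Λ̄ = P_Λ/≈` of `Λ`: a `k`-graph `bar`
without sources whose morphisms are the classes `cls x m n = [x;(m,n)]`
(`x ∈ Λ^{≤∞}`, `m ≤ n ∈ ℕ^k`), where `[x;(m,n)] = [y;(p,q)]` iff
(P1) `x(m ∧ d x, n ∧ d x) = y(p ∧ d y, q ∧ d y)`,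
(P2) `m - m ∧ d x = p - p ∧ d y` and (P3) `n - m = q - p`; together with the
range, source, degree and composition formulas, the canonical embedding
`emb : Λ → Λ̄` (`λ ↦ [λx;(0, d λ)]`) and the projection `proj = π : Λ̄ → Λ`,
`π [x;(m,n)] = [x;(m ∧ d x, n ∧ d x)]`. -/
structure Desourcification {k : ℕ} (Λ : KGraph k) where
  bar : KGraph k
  noSources : ∀ v : bar.Path, bar.IsVertex v → ∀ i : Fin k,
    ∃ e, bar.r e = v ∧ bar.d e = Pi.single i 1
  cls : BoundaryPath Λ → (Fin k → ℕ) → (Fin k → ℕ) → bar.Path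
  cls_surjective : ∀ μ : bar.Path,
    ∃ (x : BoundaryPath Λ) (m : Fin k → ℕ), μ = cls x m (m + bar.d μ)
  cls_eq_iff : ∀ (x : BoundaryPath Λ) (m n : Fin k → ℕ) (y : BoundaryPath Λ)
    (p q : Fin k → ℕ), m ≤ n → p ≤ q →
    (cls x m n = cls y p q ↔
      (x.seg (emin m x.deg) (emin n x.deg) =
          y.seg (emin p y.deg) (emin q y.deg) ∧
        m - emin m x.deg = p - emin p y.deg ∧
        n - m = q - p))
  d_cls : ∀ (x : BoundaryPath Λ) (m n : Fin k → ℕ), m ≤ n →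
    bar.d (cls x m n) = n - m
  r_cls : ∀ (x : BoundaryPath Λ) (m n : Fin k → ℕ), m ≤ n →
    bar.r (cls x m n) = cls x m m
  s_cls : ∀ (x : BoundaryPath Λ) (m n : Fin k → ℕ), m ≤ n →
    bar.s (cls x m n) = cls x n n
  comp_cls : ∀ (x y : BoundaryPath Λ) (m n p q : Fin k → ℕ), m ≤ n → p ≤ q →
    bar.s (cls x m n) = bar.r (cls y p q) →
    ∀ z : BoundaryPath Λ, IsGlue Λ x n y p z →
      bar.comp (cls x m n) (cls y p q) = cls z m (n + (q - p))
  emb : Λ.Path → bar.Path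
  emb_injective : Function.Injective emb
  emb_r : ∀ lam : Λ.Path, emb (Λ.r lam) = bar.r (emb lam)
  emb_s : ∀ lam : Λ.Path, emb (Λ.s lam) = bar.s (emb lam)
  emb_d : ∀ lam : Λ.Path, bar.d (emb lam) = Λ.d lam
  emb_comp : ∀ μ ν : Λ.Path, Λ.s μ = Λ.r ν →
    emb (Λ.comp μ ν) = bar.comp (emb μ) (emb ν)
  emb_cls : ∀ (lam : Λ.Path) (x y : BoundaryPath Λ), x.seg 0 0 = Λ.s lam →
    IsExtension Λ lam x y → emb lam = cls y 0 (Λ.d lam)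
  proj : bar.Path → Λ.Path
  proj_cls : ∀ (x : BoundaryPath Λ) (m n : Fin k → ℕ), m ≤ n →
    proj (cls x m n) = x.seg (emin m x.deg) (emin n x.deg)

/-- `IsInfClass D x p z` says that `z` is the infinite path `[x;(p,∞)]` of
`Λ̄`, i.e. `z(m,n) = [x;(p+m, p+n)]`. -/
def IsInfClass {k : ℕ} {Λ : KGraph k} (D : Desourcification Λ)
    (x : BoundaryPath Λ) (p : Fin k → ℕ) (z : BoundaryPath D.bar) : Prop :=
  (∀ i, z.deg i = (⊤ : ℕ∞)) ∧
  ∀ m n : Fin k → ℕ, m ≤ n → z.seg m n = D.cls x (p + m) (p + n)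

/-- `IsShift x n y` says that `y = σ^n(x)` is the `n`-shifted boundary path,
`σ^n(x)(p,q) = x(p+n, q+n)`, of degree `d x - n`. -/
def IsShift {k : ℕ} {Λ : KGraph k} (x : BoundaryPath Λ) (n : Fin k → ℕ)
    (y : BoundaryPath Λ) : Prop :=
  (∀ i, y.deg i = x.deg i - (n i : ℕ∞)) ∧
  ∀ p q : Fin k → ℕ, p ≤ q → (∀ i, (q i : ℕ∞) ≤ y.deg i) →
    y.seg p q = x.seg (p + n) (q + n)

section SegmentAPI

namespace KGraph

variable {k : ℕ} (B : KGraph k)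

theorem d_eq_add_sub {lam : B.Path} {a : Fin k → ℕ} (h : a ≤ B.d lam) :
    B.d lam = a + (B.d lam - a) := by
  funext i
  have := Pi.le_def.mp h i
  simp only [Pi.add_apply, Pi.sub_apply]
  omega

open Classical in
/-- Split a path at degree `a` (junk value if `a ≰ d lam`). -/
noncomputable def splitPair (lam : B.Path) (a : Fin k → ℕ) : B.Path × B.Path :=
  if h : a ≤ B.d lam then
    (B.factorization lam a (B.d lam - a) (B.d_eq_add_sub h)).exists.choose
  else (lam, lam)

theorem splitPair_spec (lam : B.Path) (a : Fin k → ℕ) (h : a ≤ B.d lam) :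
    B.d (B.splitPair lam a).1 = a ∧ B.d (B.splitPair lam a).2 = B.d lam - a ∧
      B.s (B.splitPair lam a).1 = B.r (B.splitPair lam a).2 ∧
      lam = B.comp (B.splitPair lam a).1 (B.splitPair lam a).2 := by
  rw [splitPair, dif_pos h]
  exact (B.factorization lam a (B.d lam - a) (B.d_eq_add_sub h)).exists.choose_spec

theorem splitPair_eq (lam : B.Path) (a : Fin k → ℕ) (h : a ≤ B.d lam)
    (α β : B.Path) (h1 : B.d α = a) (h2 : B.d β = B.d lam - a)
    (h3 : B.s α = B.r β) (h4 : lam = B.comp α β) :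
    B.splitPair lam a = (α, β) := by
  have hfac := B.factorization lam a (B.d lam - a) (B.d_eq_add_sub h)
  have hs := B.splitPair_spec lam a h
  exact hfac.unique ⟨hs.1, hs.2.1, hs.2.2.1, hs.2.2.2⟩ ⟨h1, h2, h3, h4⟩

/-- Initial segment of degree `a`. -/
noncomputable def fstP (lam : B.Path) (a : Fin k → ℕ) : B.Path := (B.splitPair lam a).1

/-- Final segment after degree `a`. -/
noncomputable def sndP (lam : B.Path) (a : Fin k → ℕ) : B.Path := (B.splitPair lam a).2

theorem d_fstP (lam : B.Path) (a : Fin k → ℕ) (h : a ≤ B.d lam) :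
    B.d (B.fstP lam a) = a := (B.splitPair_spec lam a h).1

theorem d_sndP (lam : B.Path) (a : Fin k → ℕ) (h : a ≤ B.d lam) :
    B.d (B.sndP lam a) = B.d lam - a := (B.splitPair_spec lam a h).2.1

theorem s_fstP (lam : B.Path) (a : Fin k → ℕ) (h : a ≤ B.d lam) :
    B.s (B.fstP lam a) = B.r (B.sndP lam a) := (B.splitPair_spec lam a h).2.2.1

theorem comp_fstP_sndP (lam : B.Path) (a : Fin k → ℕ) (h : a ≤ B.d lam) :
    lam = B.comp (B.fstP lam a) (B.sndP lam a) := (B.splitPair_spec lam a h).2.2.2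

theorem r_fstP (lam : B.Path) (a : Fin k → ℕ) (h : a ≤ B.d lam) :
    B.r (B.fstP lam a) = B.r lam := by
  conv_rhs => rw [B.comp_fstP_sndP lam a h]
  rw [B.r_comp _ _ (B.s_fstP lam a h)]

theorem s_sndP (lam : B.Path) (a : Fin k → ℕ) (h : a ≤ B.d lam) :
    B.s (B.sndP lam a) = B.s lam := by
  conv_rhs => rw [B.comp_fstP_sndP lam a h]
  rw [B.s_comp _ _ (B.s_fstP lam a h)]

theorem splitPair_zero (lam : B.Path) : B.splitPair lam 0 = (B.r lam, lam) := by
  refine B.splitPair_eq lam 0 (Pi.le_def.mpr fun i => Nat.zero_le _) _ _ (B.d_r lam) ?_ ?_ ?_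
  · funext i; simp only [Pi.sub_apply, Pi.zero_apply]; omega
  · rw [B.s_r]
  · exact (B.id_comp lam).symm

theorem fstP_zero (lam : B.Path) : B.fstP lam 0 = B.r lam := by
  rw [fstP, splitPair_zero]

theorem sndP_zero (lam : B.Path) : B.sndP lam 0 = lam := by
  rw [sndP, splitPair_zero]

theorem splitPair_full (lam : B.Path) : B.splitPair lam (B.d lam) = (lam, B.s lam) := by
  refine B.splitPair_eq lam (B.d lam) le_rfl _ _ rfl ?_ ?_ ?_
  · rw [B.d_s]; funext i; simp only [Pi.sub_apply, Pi.zero_apply]; omega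
  · rw [B.r_s]
  · exact (B.comp_id lam).symm

theorem fstP_full (lam : B.Path) : B.fstP lam (B.d lam) = lam := by
  rw [fstP, splitPair_full]

theorem sndP_full (lam : B.Path) : B.sndP lam (B.d lam) = B.s lam := by
  rw [sndP, splitPair_full]

/-- Splitting a composite inside the first factor. -/
theorem splitPair_comp (γ β : B.Path) (c : Fin k → ℕ) (hc : c ≤ B.d γ)
    (hcomp : B.s γ = B.r β) :
    B.splitPair (B.comp γ β) c = (B.fstP γ c, B.comp (B.sndP γ c) β) := by
  have hdc : B.d (B.comp γ β) = B.d γ + B.d β := B.d_comp _ _ hcomp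
  have hsnd : B.s (B.sndP γ c) = B.r β := by rw [B.s_sndP γ c hc]; exact hcomp
  refine B.splitPair_eq _ c ?_ _ _ (B.d_fstP γ c hc) ?_ ?_ ?_
  · rw [hdc]
    exact Pi.le_def.mpr fun i => le_trans (Pi.le_def.mp hc i)
      (by simp only [Pi.add_apply]; omega)
  · rw [B.d_comp _ _ hsnd, B.d_sndP γ c hc, hdc]
    funext i
    have := Pi.le_def.mp hc i
    simp only [Pi.add_apply, Pi.sub_apply]
    omega
  · rw [B.r_comp _ _ hsnd]; exact B.s_fstP γ c hc
  · rw [← B.comp_assoc _ _ _ (B.s_fstP γ c hc) hsnd, ← B.comp_fstP_sndP γ c hc]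

theorem fstP_comp' (γ β : B.Path) (c : Fin k → ℕ) (hc : c ≤ B.d γ)
    (hcomp : B.s γ = B.r β) : B.fstP (B.comp γ β) c = B.fstP γ c := by
  rw [fstP, splitPair_comp B γ β c hc hcomp]

theorem sndP_comp' (γ β : B.Path) (c : Fin k → ℕ) (hc : c ≤ B.d γ)
    (hcomp : B.s γ = B.r β) :
    B.sndP (B.comp γ β) c = B.comp (B.sndP γ c) β := by
  rw [sndP, splitPair_comp B γ β c hc hcomp]

theorem fstP_comp (α β : B.Path) (hcomp : B.s α = B.r β) :
    B.fstP (B.comp α β) (B.d α) = α := by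
  rw [B.fstP_comp' α β _ le_rfl hcomp, fstP_full]

theorem sndP_comp (α β : B.Path) (hcomp : B.s α = B.r β) :
    B.sndP (B.comp α β) (B.d α) = β := by
  rw [B.sndP_comp' α β _ le_rfl hcomp, sndP_full, hcomp, B.id_comp]

/-- Splitting twice. -/
theorem splitPair_add (ρ : B.Path) (a b : Fin k → ℕ) (h : a + b ≤ B.d ρ) :
    B.splitPair ρ (a + b) =
      (B.comp (B.fstP ρ a) (B.fstP (B.sndP ρ a) b), B.sndP (B.sndP ρ a) b) := by
  have ha : a ≤ B.d ρ := Pi.le_def.mpr fun i => by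
    have := Pi.le_def.mp h i; simp only [Pi.add_apply] at this; omega
  have hb : b ≤ B.d (B.sndP ρ a) := by
    rw [B.d_sndP ρ a ha]
    refine Pi.le_def.mpr fun i => ?_
    have := Pi.le_def.mp h i
    simp only [Pi.add_apply] at this
    simp only [Pi.sub_apply]
    omega
  have hFr : B.s (B.fstP ρ a) = B.r (B.fstP (B.sndP ρ a) b) := by
    rw [B.r_fstP _ b hb]; exact B.s_fstP ρ a ha
  refine B.splitPair_eq _ _ h _ _ ?_ ?_ ?_ ?_
  · rw [B.d_comp _ _ hFr, B.d_fstP ρ a ha, B.d_fstP _ b hb]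
  · rw [B.d_sndP _ b hb, B.d_sndP ρ a ha]
    funext i
    have := Pi.le_def.mp h i
    simp only [Pi.add_apply, Pi.sub_apply] at *
    omega
  · rw [B.s_comp _ _ hFr]; exact B.s_fstP _ b hb
  · rw [B.comp_assoc _ _ _ hFr (B.s_fstP _ b hb), ← B.comp_fstP_sndP _ b hb]
    exact B.comp_fstP_sndP ρ a ha

theorem fstP_add (ρ : B.Path) (a b : Fin k → ℕ) (h : a + b ≤ B.d ρ) :
    B.fstP ρ (a + b) = B.comp (B.fstP ρ a) (B.fstP (B.sndP ρ a) b) := by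
  rw [fstP, splitPair_add B ρ a b h]

theorem sndP_add (ρ : B.Path) (a b : Fin k → ℕ) (h : a + b ≤ B.d ρ) :
    B.sndP ρ (a + b) = B.sndP (B.sndP ρ a) b := by
  rw [sndP, splitPair_add B ρ a b h]

/-- The segment of `lam` between degrees `a` and `b`. -/
noncomputable def segP (lam : B.Path) (a b : Fin k → ℕ) : B.Path :=
  B.fstP (B.sndP lam a) (b - a)

section SegLemmas

variable (lam : B.Path) (a b c : Fin k → ℕ)

theorem le_sub_d {a b : Fin k → ℕ} {lam : B.Path} (hab : a ≤ b) (hb : b ≤ B.d lam) :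
    b - a ≤ B.d (B.sndP lam a) := by
  rw [B.d_sndP lam a (le_trans hab hb)]
  refine Pi.le_def.mpr fun i => ?_
  have h1 := Pi.le_def.mp hab i
  have h2 := Pi.le_def.mp hb i
  simp only [Pi.sub_apply]
  omega

theorem segP_d (hab : a ≤ b) (hb : b ≤ B.d lam) : B.d (B.segP lam a b) = b - a :=
  B.d_fstP _ _ (B.le_sub_d hab hb)

theorem segP_refl (ha : a ≤ B.d lam) : B.segP lam a a = B.r (B.sndP lam a) := by
  have : a - a = (0 : Fin k → ℕ) := by
    funext i; simp only [Pi.sub_apply, Pi.zero_apply]; omega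
  rw [segP, this, fstP_zero]

theorem segP_r (hab : a ≤ b) (hb : b ≤ B.d lam) :
    B.r (B.segP lam a b) = B.segP lam a a := by
  rw [segP, B.r_fstP _ _ (B.le_sub_d hab hb), B.segP_refl lam a (le_trans hab hb)]

theorem sndP_sub (hab : a ≤ b) (hb : b ≤ B.d lam) :
    B.sndP (B.sndP lam a) (b - a) = B.sndP lam b := by
  have hadd : a + (b - a) = b := by
    funext i
    have := Pi.le_def.mp hab i
    simp only [Pi.add_apply, Pi.sub_apply]
    omega
  rw [← B.sndP_add lam a (b - a) (by rw [hadd]; exact hb), hadd]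

theorem segP_s (hab : a ≤ b) (hb : b ≤ B.d lam) :
    B.s (B.segP lam a b) = B.segP lam b b := by
  rw [segP, B.s_fstP _ _ (B.le_sub_d hab hb), B.sndP_sub lam a b hab hb,
    B.segP_refl lam b hb]

theorem segP_comp (hab : a ≤ b) (hbc : b ≤ c) (hc : c ≤ B.d lam) :
    B.comp (B.segP lam a b) (B.segP lam b c) = B.segP lam a c := by
  have hb : b ≤ B.d lam := le_trans hbc hc
  have hadd : (b - a) + (c - b) = c - a := by
    funext i
    have h1 := Pi.le_def.mp hab i
    have h2 := Pi.le_def.mp hbc i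
    simp only [Pi.add_apply, Pi.sub_apply]
    omega
  have hsum : (b - a) + (c - b) ≤ B.d (B.sndP lam a) := by
    rw [hadd]; exact B.le_sub_d (le_trans hab hbc) hc
  rw [segP, segP, segP, ← B.sndP_sub lam a b hab hb, ← hadd,
    B.fstP_add _ _ _ hsum]

theorem segP_zero_left (hb : b ≤ B.d lam) : B.segP lam 0 b = B.fstP lam b := by
  have : b - 0 = b := by funext i; simp only [Pi.sub_apply, Pi.zero_apply]; omega
  rw [segP, sndP_zero, this]

theorem segP_full (ha : a ≤ B.d lam) : B.segP lam a (B.d lam) = B.sndP lam a := by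
  rw [segP, ← B.d_sndP lam a ha, fstP_full]

/-- Cut independence: a segment of `comp α β` inside `α` is a segment of `α`. -/
theorem segP_comp_left (α β : B.Path) (hab : a ≤ b) (hb : b ≤ B.d α)
    (hcomp : B.s α = B.r β) : B.segP (B.comp α β) a b = B.segP α a b := by
  have ha : a ≤ B.d α := le_trans hab hb
  have hsnd : B.s (B.sndP α a) = B.r β := by rw [B.s_sndP α a ha]; exact hcomp
  rw [segP, segP, B.sndP_comp' α β a ha hcomp,
    B.fstP_comp' _ β _ (B.le_sub_d hab hb) hsnd]

/-- A segment of `comp ν β` inside `β`. -/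
theorem segP_comp_right (ν β : B.Path) (hab : a ≤ b) (hb : b ≤ B.d β)
    (hcomp : B.s ν = B.r β) :
    B.segP (B.comp ν β) (B.d ν + a) (B.d ν + b) = B.segP β a b := by
  have hd : B.d (B.comp ν β) = B.d ν + B.d β := B.d_comp _ _ hcomp
  have hsub : (B.d ν + b) - (B.d ν + a) = b - a := by
    funext i; simp only [Pi.add_apply, Pi.sub_apply]; omega
  have hle : B.d ν + a ≤ B.d (B.comp ν β) := by
    rw [hd]
    refine Pi.le_def.mpr fun i => ?_
    have := le_trans (Pi.le_def.mp hab i) (Pi.le_def.mp hb i)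
    simp only [Pi.add_apply]
    omega
  have hkey : B.sndP (B.comp ν β) (B.d ν + a) = B.sndP β a := by
    rw [B.sndP_add _ _ _ hle, B.sndP_comp ν β hcomp]
  rw [segP, hsub, hkey, segP]

end SegLemmas

end KGraph

end SegmentAPI

section InfPath

theorem emin_coe {k : ℕ} (m : Fin k → ℕ) (e : Fin k → ℕ∞) (i : Fin k) :
    ((emin m e i : ℕ) : ℕ∞) = min ((m i : ℕ∞)) (e i) := by
  unfold emin
  exact ENat.coe_toNat (ne_top_of_le_ne_top (ENat.coe_ne_top _) (min_le_left _ _))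

theorem isGlue_self {k : ℕ} (Λ : KGraph k) (x : BoundaryPath Λ) (n : Fin k → ℕ) :
    IsGlue Λ x n x n x := by
  refine ⟨fun i => ?_, rfl, fun t _ => rfl⟩
  rw [emin_coe]
  exact (add_tsub_cancel_of_le (min_le_right _ _)).symm

variable {k : ℕ} {Λ : KGraph k}

/-- The infinite path `[x;(p,∞)]` in `Λ̄`. -/
def infPath (D : Desourcification Λ) (x : BoundaryPath Λ) (p : Fin k → ℕ) :
    BoundaryPath D.bar where
  deg := fun _ => ⊤
  seg a b := D.cls x (p + a) (p + b)
  seg_d a b hab _ := by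
    rw [D.d_cls x _ _ (add_le_add_right hab p)]
    funext i
    have := Pi.le_def.mp hab i
    simp only [Pi.add_apply, Pi.sub_apply]
    omega
  seg_r a b hab _ := by rw [D.r_cls x _ _ (add_le_add_right hab p)]
  seg_s a b hab _ := by rw [D.s_cls x _ _ (add_le_add_right hab p)]
  seg_comp a b c hab hbc _ := by
    rw [D.comp_cls x x (p + a) (p + b) (p + b) (p + c) (add_le_add_right hab p)
        (add_le_add_right hbc p)
        (by rw [D.s_cls x _ _ (add_le_add_right hab p),
              D.r_cls x _ _ (add_le_add_right hbc p)])
        x (isGlue_self Λ x (p + b))]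
    congr 1
    funext i
    have := Pi.le_def.mp hbc i
    simp only [Pi.add_apply, Pi.sub_apply]
    omega
  boundary p' _ i htop := absurd htop (ENat.coe_ne_top _)

theorem infPath_isInfClass (D : Desourcification Λ) (x : BoundaryPath Λ)
    (p : Fin k → ℕ) : IsInfClass D x p (infPath D x p) :=
  ⟨fun _ => rfl, fun _ _ _ => rfl⟩

end InfPath

section ExtBP

variable {k : ℕ} {Λ : KGraph k}

/-- The extension `ν · X` of a path `ν` by an infinite boundary path `X`
in a `k`-graph `B`. -/
noncomputable def extBP (B : KGraph k) (ν : B.Path) (X : BoundaryPath B)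
    (hdeg : ∀ i, X.deg i = ⊤) (hs : B.s ν = X.seg 0 0) : BoundaryPath B := by
  have htop : ∀ (t : Fin k → ℕ) (i : Fin k), (t i : ℕ∞) ≤ X.deg i :=
    fun t i => by rw [hdeg i]; exact le_top
  have hsb : ∀ b : Fin k → ℕ, B.s ν = B.r (X.seg 0 b) := fun b => by
    rw [X.seg_r 0 b (Pi.le_def.mpr fun i => Nat.zero_le _) (htop b)]
    exact hs
  have hdX : ∀ b : Fin k → ℕ, B.d (X.seg 0 b) = b := fun b => by
    rw [X.seg_d 0 b (Pi.le_def.mpr fun i => Nat.zero_le _) (htop b)]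
    funext i; simp only [Pi.sub_apply, Pi.zero_apply]; omega
  have hdC : ∀ b : Fin k → ℕ, B.d (B.comp ν (X.seg 0 b)) = B.d ν + b := fun b => by
    rw [B.d_comp _ _ (hsb b), hdX b]
  have hle : ∀ b : Fin k → ℕ, b ≤ B.d ν + b := fun b =>
    Pi.le_def.mpr fun i => by simp only [Pi.add_apply]; omega
  have hdecomp : ∀ b c : Fin k → ℕ, b ≤ c →
      B.comp ν (X.seg 0 c) = B.comp (B.comp ν (X.seg 0 b)) (X.seg b c) := by
    intro b c hbc
    rw [B.comp_assoc ν (X.seg 0 b) (X.seg b c) (hsb b)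
        (by rw [X.seg_s 0 b (Pi.le_def.mpr fun i => Nat.zero_le _) (htop b),
              X.seg_r b c hbc (htop c)]),
      X.seg_comp 0 b c (Pi.le_def.mpr fun i => Nat.zero_le _) hbc (htop c)]
  have hmid : ∀ b c : Fin k → ℕ, b ≤ c →
      B.s (B.comp ν (X.seg 0 b)) = B.r (X.seg b c) := by
    intro b c hbc
    rw [B.s_comp _ _ (hsb b),
      X.seg_s 0 b (Pi.le_def.mpr fun i => Nat.zero_le _) (htop b),
      X.seg_r b c hbc (htop c)]
  have hcut : ∀ a b c : Fin k → ℕ, a ≤ b → b ≤ c →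
      B.segP (B.comp ν (X.seg 0 c)) a b = B.segP (B.comp ν (X.seg 0 b)) a b := by
    intro a b c hab hbc
    rw [hdecomp b c hbc]
    exact B.segP_comp_left a b _ _ hab (by rw [hdC b]; exact hle b) (hmid b c hbc)
  exact
  { deg := fun _ => ⊤
    seg := fun a b => B.segP (B.comp ν (X.seg 0 b)) a b
    seg_d := fun a b hab _ => B.segP_d _ a b hab (by rw [hdC b]; exact hle b)
    seg_r := fun a b hab _ => by
      show B.r (B.segP (B.comp ν (X.seg 0 b)) a b) = B.segP (B.comp ν (X.seg 0 a)) a a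
      rw [B.segP_r _ a b hab (by rw [hdC b]; exact hle b)]
      exact hcut a a b le_rfl hab
    seg_s := fun a b hab _ => B.segP_s _ a b hab (by rw [hdC b]; exact hle b)
    seg_comp := fun a b c hab hbc _ => by
      show B.comp (B.segP (B.comp ν (X.seg 0 b)) a b) (B.segP (B.comp ν (X.seg 0 c)) b c) =
        B.segP (B.comp ν (X.seg 0 c)) a c
      rw [← hcut a b c hab hbc]
      exact B.segP_comp (B.comp ν (X.seg 0 c)) a b c hab hbc (by rw [hdC c]; exact hle c)
    boundary := fun p' _ i htop' => absurd htop' (ENat.coe_ne_top _) }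

theorem extBP_isExtension (B : KGraph k) (ν : B.Path) (X : BoundaryPath B)
    (hdeg : ∀ i, X.deg i = ⊤) (hs : B.s ν = X.seg 0 0) :
    IsExtension B ν X (extBP B ν X hdeg hs) := by
  have hzle : ∀ b : Fin k → ℕ, (0 : Fin k → ℕ) ≤ b :=
    fun b => Pi.le_def.mpr fun i => Nat.zero_le _
  have htop : ∀ (t : Fin k → ℕ) (i : Fin k), (t i : ℕ∞) ≤ X.deg i :=
    fun t i => by rw [hdeg i]; exact le_top
  have hsb : ∀ b : Fin k → ℕ, B.s ν = B.r (X.seg 0 b) := fun b => by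
    rw [X.seg_r 0 b (hzle b) (htop b)]
    exact hs
  have hdX : ∀ b : Fin k → ℕ, B.d (X.seg 0 b) = b := fun b => by
    rw [X.seg_d 0 b (hzle b) (htop b)]
    funext i; simp only [Pi.sub_apply, Pi.zero_apply]; omega
  have hZseg : ∀ a b : Fin k → ℕ,
      (extBP B ν X hdeg hs).seg a b = B.segP (B.comp ν (X.seg 0 b)) a b :=
    fun a b => rfl
  refine ⟨fun i => by rw [hdeg i, add_top]; rfl, ?_, ?_⟩
  · rw [hZseg, B.segP_zero_left (B.comp ν (X.seg 0 (B.d ν))) (B.d ν) (by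
      rw [B.d_comp _ _ (hsb _), hdX]
      exact Pi.le_def.mpr fun i => by simp only [Pi.add_apply]; omega)]
    exact B.fstP_comp ν (X.seg 0 (B.d ν)) (hsb _)
  · intro t _
    rw [hZseg]
    have h1 : B.segP (B.comp ν (X.seg 0 (B.d ν + t))) (B.d ν + 0) (B.d ν + t) =
        B.segP (X.seg 0 (B.d ν + t)) 0 t := by
      refine B.segP_comp_right 0 t ν _ (hzle t) ?_ (hsb _)
      rw [hdX]
      exact Pi.le_def.mpr fun i => by simp only [Pi.add_apply]; omega
    rw [show B.d ν + (0 : Fin k → ℕ) = B.d ν from add_zero _] at h1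
    rw [h1]
    -- now: segment of the boundary path itself
    have hXc : X.seg 0 (B.d ν + t) = B.comp (X.seg 0 t) (X.seg t (B.d ν + t)) := by
      rw [X.seg_comp 0 t (B.d ν + t) (hzle t)
        (Pi.le_def.mpr fun i => by simp only [Pi.add_apply]; omega) (htop _)]
    rw [hXc, B.segP_comp_left 0 t (X.seg 0 t) (X.seg t (B.d ν + t)) (hzle t) (by rw [hdX]) (by
        rw [X.seg_s 0 t (hzle t) (htop t),
          X.seg_r t (B.d ν + t) (Pi.le_def.mpr fun i => by simp only [Pi.add_apply]; omega)
            (htop _)])]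
    have h2 := B.segP_full (X.seg 0 t) 0 (by rw [hdX]; exact hzle t)
    rw [hdX] at h2
    rw [h2, B.sndP_zero]
end ExtBP

/-- Lemma 3.4: Let `Λ` be a row-finite `k`-graph and `Λ̄`
its desourcification.  If `μ ∼_{Λ̄} ν` and `μ = [x;(m, m + d μ)]` for some
`x ∈ Λ^{≤∞}` and `m ∈ ℕ^k`, then `ν = [x;(m, m + d ν)]`. -/
theorem statement2 {k : ℕ} (Λ : KGraph k) (hrf : Λ.RowFinite)
    (D : Desourcification Λ) (μ ν : D.bar.Path) (h : D.bar.peq μ ν)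
    (x : BoundaryPath Λ) (m : Fin k → ℕ)
    (hμ : μ = D.cls x m (m + D.bar.d μ)) :
    ν = D.cls x m (m + D.bar.d ν) := by
  have hle1 : m ≤ m + D.bar.d μ :=
    Pi.le_def.mpr fun i => by simp only [Pi.add_apply]; omega
  have hsμ : D.bar.s μ = D.cls x (m + D.bar.d μ) (m + D.bar.d μ) := by
    have h0 := D.s_cls x m (m + D.bar.d μ) hle1
    rw [← hμ] at h0
    exact h0
  -- the common infinite tail `X = [x;(m + d μ, ∞)]`
  have hXdeg : ∀ i, (infPath D x (m + D.bar.d μ)).deg i = ⊤ := fun _ => rfl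
  have hX00 : (infPath D x (m + D.bar.d μ)).seg 0 0 = D.bar.s μ := by
    show D.cls x ((m + D.bar.d μ) + 0) ((m + D.bar.d μ) + 0) = _
    rw [add_zero, hsμ]
  have hsX : D.bar.s ν = (infPath D x (m + D.bar.d μ)).seg 0 0 := by
    rw [hX00]; exact h.1.symm
  -- `Y = [x;(m,∞)] = μ · X`
  have hYext : IsExtension D.bar μ (infPath D x (m + D.bar.d μ)) (infPath D x m) := by
    refine ⟨fun i => ?_, ?_, fun t _ => ?_⟩
    · show (⊤ : ℕ∞) = (D.bar.d μ i : ℕ∞) + ⊤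
      rw [add_top]
    · show D.cls x (m + 0) (m + D.bar.d μ) = μ
      rw [add_zero]; exact hμ.symm
    · show D.cls x (m + D.bar.d μ) (m + (D.bar.d μ + t)) =
        D.cls x ((m + D.bar.d μ) + 0) ((m + D.bar.d μ) + t)
      rw [add_zero, add_assoc]
  -- `Z = ν · X`
  have hZext := extBP_isExtension D.bar ν (infPath D x (m + D.bar.d μ)) hXdeg hsX
  have hbp := h.2 (infPath D x (m + D.bar.d μ)) (infPath D x m)
    (extBP D.bar ν (infPath D x (m + D.bar.d μ)) hXdeg hsX) hX00 hYext hZext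
  have h1 := hbp.2 0 (D.bar.d ν) (Pi.le_def.mpr fun i => Nat.zero_le _)
    (fun i => le_top)
  rw [hZext.2.1] at h1
  calc ν = D.cls x (m + 0) (m + D.bar.d ν) := h1.symm
    _ = D.cls x m (m + D.bar.d ν) := by rw [add_zero]
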